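/- The graph K_{k+1} + \overline{K_k}, obtained from the complete graph K_{k+1} by adding k new vertices and joining every vertex of K_{k+1} to all k new vertices, arrows (K_{1,k}, K_3): every red-blue coloring of its edges yields a red copy of K_{1,k} or a blue copy of K_3. Consequently r̂(K_{1,k}, K_3) ≤ C(2k+1, 2) − C(k, 2). -/

import Mathlib

open SimpleGraph

/-- `H` contains a copy of `G`, i.e. there is an injective graph homomorphism `G →g H`. -/
def ContainsCopy {α β : Type*} (G : SimpleGraph α) (H : SimpleGraph β) : Prop :=
  ∃ f : G →g H, Function.Injective f

/-- `F ⟶ (G, H)` : for every red-blue colouring of the edges of `F` (encoded by the red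
subgraph `R ≤ F`, the blue edges being `F \ R`) there is a red copy of `G` or a blue copy
of `H`. -/
def Arrows {γ α β : Type*} (F : SimpleGraph γ) (G : SimpleGraph α) (H : SimpleGraph β) : Prop :=
  ∀ R : SimpleGraph γ, R ≤ F → ContainsCopy G R ∨ ContainsCopy H (F \ R)

/-- The Ramsey number `r(G, H)` : the least `n` such that `K_n ⟶ (G, H)`. -/
noncomputable def ramseyNumber {α β : Type*} (G : SimpleGraph α) (H : SimpleGraph β) : ℕ :=
  sInf {n : ℕ | Arrows (⊤ : SimpleGraph (Fin n)) G H}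

/-- The size Ramsey number `r̂(G, H)` : the least number of edges of a graph `F` with
`F ⟶ (G, H)`. -/
noncomputable def sizeRamsey {α β : Type*} (G : SimpleGraph α) (H : SimpleGraph β) : ℕ :=
  sInf {m : ℕ | ∃ (N : ℕ) (F : SimpleGraph (Fin N)), Arrows F G H ∧ F.edgeSet.ncard = m}

/-- The restricted size Ramsey number `r̂*(G, H)` : the least number of edges of a graph `F`
on exactly `r(G, H)` vertices with `F ⟶ (G, H)`. -/
noncomputable def restrictedSizeRamsey {α β : Type*} (G : SimpleGraph α) (H : SimpleGraph β) : ℕ :=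
  sInf {m : ℕ | ∃ F : SimpleGraph (Fin (ramseyNumber G H)),
    Arrows F G H ∧ F.edgeSet.ncard = m}

/-- The star `K_{1,k}` with `k` edges. -/
def starGraph (k : ℕ) : SimpleGraph (Fin 1 ⊕ Fin k) := completeBipartiteGraph (Fin 1) (Fin k)


/-- The graph `K_{k+1} + \overline{K_k}` : a complete graph on `k+1` vertices together with
`k` further vertices, each joined to all vertices of the `K_{k+1}`. -/
def cliquePlusIndep (k : ℕ) : SimpleGraph (Fin (k+1) ⊕ Fin k) :=
  SimpleGraph.fromRel (fun x y => x.isLeft ∨ y.isLeft)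

lemma cpi_adj {k : ℕ} (x y : Fin (k+1) ⊕ Fin k) :
    (cliquePlusIndep k).Adj x y ↔ x ≠ y ∧ (x.isLeft ∨ y.isLeft) := by
  simp only [cliquePlusIndep, SimpleGraph.fromRel_adj]
  tauto

lemma cpi_card (k : ℕ) : Fintype.card (Fin (k+1) ⊕ Fin k) = 2*k+1 := by
  simp; omega

lemma cpi_arrows (k : ℕ) : Arrows (cliquePlusIndep k) (_root_.starGraph k) (⊤ : SimpleGraph (Fin 3)) := by
  classical
  intro R hR
  by_cases hred : ∃ v, k ≤ (R.neighborFinset v).card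
  · left
    obtain ⟨v, hv⟩ := hred
    obtain ⟨s, hs_sub, hs_card⟩ := Finset.exists_subset_card_eq hv
    let e := Finset.equivFinOfCardEq hs_card
    have hmem : ∀ i : Fin k, R.Adj v ↑(e.symm i) := by
      intro i
      exact (R.mem_neighborFinset v _).1 (hs_sub (e.symm i).2)
    refine ⟨⟨Sum.elim (fun _ => v) (fun i => ((e.symm i : s) : Fin (k+1) ⊕ Fin k)), ?_⟩, ?_⟩
    · intro a b hab
      rcases a with a | a <;> rcases b with b | b <;>
        simp only [_root_.starGraph, completeBipartiteGraph_adj, Sum.isLeft_inl, Sum.isRight_inl,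
          Sum.isLeft_inr, Sum.isRight_inr] at hab
      · simp at hab
      · exact hmem b
      · exact (hmem a).symm
      · simp at hab
    · intro a b hab
      rcases a with a | a <;> rcases b with b | b
      · exact congrArg Sum.inl (Subsingleton.elim a b)
      · exact absurd (hab : v = _) (hmem b).ne
      · exact absurd (hab : (_ : Fin (k+1) ⊕ Fin k) = v).symm (hmem a).ne
      · exact congrArg Sum.inr (e.symm.injective (Subtype.val_injective hab))
  · right
    push_neg at hred
    set F := cliquePlusIndep k with hFdef
    set B := F \ R with hBdef
    have hFdeg : ∀ v : Fin (k+1) ⊕ Fin k, v.isLeft → (F.neighborFinset v).card = 2*k := by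
      intro v hv
      have hset : F.neighborFinset v = Finset.univ.erase v := by
        ext y
        simp only [mem_neighborFinset, Finset.mem_erase, Finset.mem_univ, and_true, hFdef,
          cpi_adj, hv]
        simp [ne_comm]
      rw [hset, Finset.card_erase_of_mem (Finset.mem_univ v), Finset.card_univ, cpi_card]
      omega
    have hblue : ∀ v : Fin (k+1) ⊕ Fin k, v.isLeft → k+1 ≤ (B.neighborFinset v).card := by
      intro v hv
      have hsub : F.neighborFinset v ⊆ B.neighborFinset v ∪ R.neighborFinset v := by
        intro y hy
        simp only [Finset.mem_union, mem_neighborFinset, hBdef, sdiff_adj] at *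
        by_cases hr : R.Adj v y
        · exact Or.inr hr
        · exact Or.inl ⟨hy, hr⟩
      have h1 := Finset.card_le_card hsub
      have h2 := Finset.card_union_le (B.neighborFinset v) (R.neighborFinset v)
      have h3 := hred v
      have h4 := hFdeg v hv
      omega
    set u : Fin (k+1) ⊕ Fin k := Sum.inl 0 with hu_def
    have hu : u.isLeft := rfl
    obtain ⟨w, hwmem, hwleft⟩ : ∃ w ∈ B.neighborFinset u, w.isLeft := by
      by_contra hcon
      push_neg at hcon
      have hsub : B.neighborFinset u ⊆ Finset.univ.image Sum.inr := by
        intro y hy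
        rcases y with a | b
        · exact absurd rfl (hcon _ hy)
        · simp
      have hc1 := Finset.card_le_card hsub
      have hc2 : (Finset.univ.image (Sum.inr : Fin k → Fin (k+1) ⊕ Fin k)).card = k := by
        rw [Finset.card_image_of_injective _ Sum.inr_injective, Finset.card_univ, Fintype.card_fin]
      have hc3 := hblue u hu
      omega
    obtain ⟨x, hx⟩ : ((B.neighborFinset u) ∩ (B.neighborFinset w)).Nonempty := by
      by_contra hcon
      rw [Finset.not_nonempty_iff_eq_empty, ← Finset.disjoint_iff_inter_eq_empty] at hcon
      have h1 := Finset.card_union_of_disjoint hcon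
      have h2 : (B.neighborFinset u ∪ B.neighborFinset w).card ≤ 2*k+1 := by
        refine le_trans (Finset.card_le_card (Finset.subset_univ _)) ?_
        rw [Finset.card_univ, cpi_card]
      have h3 := hblue u hu
      have h4 := hblue w hwleft
      omega
    rw [Finset.mem_inter, mem_neighborFinset, mem_neighborFinset] at hx
    obtain ⟨hux, hwx⟩ := hx
    have huw : B.Adj u w := (B.mem_neighborFinset u w).1 hwmem
    have hne1 : u ≠ w := huw.ne
    have hne2 : u ≠ x := hux.ne
    have hne3 : w ≠ x := hwx.ne
    refine ⟨⟨![u, w, x], ?_⟩, ?_⟩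
    · intro a b hab
      have hab' : a ≠ b := hab
      fin_cases a <;> fin_cases b <;>
        first
          | exact absurd rfl hab'
          | exact huw | exact huw.symm | exact hux | exact hux.symm
          | exact hwx | exact hwx.symm
    · intro a b hab
      have hab2 : ![u, w, x] a = ![u, w, x] b := hab
      fin_cases a <;> fin_cases b <;> simp_all

lemma cpi_edge_count (k : ℕ) (hk : 1 ≤ k) :
    (cliquePlusIndep k).edgeSet.ncard = (2*k+1).choose 2 - k.choose 2 := by
  classical
  have hnc : (cliquePlusIndep k).edgeSet.ncard = (cliquePlusIndep k).edgeFinset.card := by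
    simp [SimpleGraph.edgeFinset, Set.ncard_eq_toFinset_card']
  have hdegl : ∀ a : Fin (k+1), (cliquePlusIndep k).degree (Sum.inl a) = 2*k := by
    intro a
    have hset : (cliquePlusIndep k).neighborFinset (Sum.inl a) = Finset.univ.erase (Sum.inl a) := by
      ext y
      simp only [mem_neighborFinset, Finset.mem_erase, Finset.mem_univ, and_true, cpi_adj,
        Sum.isLeft_inl]
      simp [ne_comm]
    rw [SimpleGraph.degree, hset, Finset.card_erase_of_mem (Finset.mem_univ _),
      Finset.card_univ, cpi_card]
    omega
  have hdegr : ∀ b : Fin k, (cliquePlusIndep k).degree (Sum.inr b) = k+1 := by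
    intro b
    have hset : (cliquePlusIndep k).neighborFinset (Sum.inr b)
        = Finset.univ.image (Sum.inl : Fin (k+1) → Fin (k+1) ⊕ Fin k) := by
      ext y
      rcases y with a | c <;> simp [mem_neighborFinset, cpi_adj]
    rw [SimpleGraph.degree, hset, Finset.card_image_of_injective _ Sum.inl_injective,
      Finset.card_univ, Fintype.card_fin]
  have hsum : ∑ v, (cliquePlusIndep k).degree v = 3*(k*k) + 3*k := by
    rw [Fintype.sum_sum_type]
    simp only [hdegl, hdegr, Finset.sum_const, Finset.card_univ, Fintype.card_fin,
      smul_eq_mul]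
    ring
  have hhs := (cliquePlusIndep k).sum_degrees_eq_twice_card_edges
  have h2c : 2 * (cliquePlusIndep k).edgeFinset.card = 3*(k*k) + 3*k := by
    rw [← hhs, hsum]
  have e1 : (2*k+1).choose 2 = 2*(k*k) + k := by
    rw [Nat.choose_two_right]
    have h : (2*k+1) * (2*k+1-1) = (2*(k*k)+k)*2 := by
      rw [show 2*k+1-1 = 2*k by omega]; ring
    rw [h, Nat.mul_div_cancel _ (by norm_num)]
  have e2 : 2 * k.choose 2 = k*k - k := by
    obtain ⟨j, rfl⟩ : ∃ j, k = j + 1 := ⟨k-1, by omega⟩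
    rw [Nat.choose_two_right]
    rw [show (j+1) * (j+1-1) = j*(j+1) by rw [show j+1-1 = j from rfl]; ring]
    rw [Nat.mul_div_cancel' (Nat.even_mul_succ_self j).two_dvd]
    exact Nat.eq_sub_of_add_eq (by ring)
  have hk2 : k ≤ k*k := Nat.le_mul_of_pos_left k hk
  rw [hnc, e1]
  generalize k.choose 2 = B at e2 ⊢
  generalize k*k = a at h2c e2 hk2 ⊢
  omega

theorem stmt2 (k : ℕ) (hk : 1 ≤ k) :
    Arrows (cliquePlusIndep k) (_root_.starGraph k) (⊤ : SimpleGraph (Fin 3)) ∧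
      sizeRamsey (_root_.starGraph k) (⊤ : SimpleGraph (Fin 3)) ≤
        (2*k+1).choose 2 - k.choose 2 := by
  classical
  refine ⟨cpi_arrows k, ?_⟩
  let e : (Fin (k+1) ⊕ Fin k) ≃ Fin (2*k+1) := finSumFinEquiv.trans (finCongr (by omega))
  let F' : SimpleGraph (Fin (2*k+1)) := (cliquePlusIndep k).map e.toEmbedding
  have hiso : cliquePlusIndep k ≃g F' := SimpleGraph.Iso.map e _
  have harr' : Arrows F' (_root_.starGraph k) (⊤ : SimpleGraph (Fin 3)) := by
    intro R' hR'
    have hle : R'.comap (e : (Fin (k+1) ⊕ Fin k) → Fin (2*k+1)) ≤ cliquePlusIndep k := by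
      intro a b hab
      have h1 : F'.Adj (e a) (e b) := hR' hab
      exact map_adj_apply.mp h1
    rcases cpi_arrows k (R'.comap (e : (Fin (k+1) ⊕ Fin k) → Fin (2*k+1))) hle with
      ⟨f, hf⟩ | ⟨f, hf⟩
    · left
      exact ⟨⟨fun a => e (f a), fun h => f.map_rel h⟩, e.injective.comp hf⟩
    · right
      refine ⟨⟨fun a => e (f a), fun {a b} h => ?_⟩, e.injective.comp hf⟩
      have h2 := f.map_rel h
      rw [sdiff_adj] at h2 ⊢
      exact ⟨map_adj_apply.mpr h2.1, h2.2⟩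
  have hcount : F'.edgeSet.ncard = (cliquePlusIndep k).edgeSet.ncard := by
    rw [← Nat.card_coe_set_eq, ← Nat.card_coe_set_eq]
    exact Nat.card_congr hiso.mapEdgeSet.symm
  exact Nat.sInf_le ⟨2*k+1, F', harr', by rw [hcount, cpi_edge_count k hk]⟩
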